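/- Let L, M, N ⊆ [m] with L a proper subset of [m], and let C = C(Δ_L^c, Δ_M, Δ_N). If |L| ≤ m − 2, then C is a minimal code; moreover, if |M| + |N| ≥ 3, then C is self-orthogonal. -/

import Mathlib

open Finset Polynomial
open scoped Classical

/-- `V m` is the vector space `F₂^m`. -/
abbrev V (m : ℕ) := Fin m → ZMod 2

/-- Dot product `x·y = Σ_i x_i y_i` in `F₂`. -/
def dot {m : ℕ} (x y : V m) : ZMod 2 := ∑ i, x i * y i

/-- `Supp v = {i : v i ≠ 0}`. -/
def supp {m : ℕ} (v : V m) : Finset (Fin m) := Finset.univ.filter fun i => v i ≠ 0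

/-- The simplicial complex `Δ_L = {v : Supp v ⊆ L}` generated by `L`. -/
def Δ {m : ℕ} (L : Finset (Fin m)) : Finset (V m) := Finset.univ.filter fun v => supp v ⊆ L

/-- Hamming weight of a vector. -/
def wtv {ι : Type} [Fintype ι] (c : ι → ZMod 2) : ℕ :=
  (Finset.univ.filter fun i => c i ≠ 0).card

/-- The linear functional `x ↦ x·y`. -/
noncomputable def dotL {m : ℕ} (y : V m) : V m →ₗ[ZMod 2] ZMod 2 :=
  ∑ i, LinearMap.smulRight (LinearMap.proj i) (y i)

/-- The linear map `(α,β,γ) ↦ ((d₁,d₂,d₃) ↦ α·d₁ + (β+γ)·d₂ + β·d₃)` whose range is the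
binary code `C(D₁,D₂,D₃)`. -/
noncomputable def codeMap {m : ℕ} (D₁ D₂ D₃ : Finset (V m)) :
    (V m × V m × V m) →ₗ[ZMod 2]
      (({x // x ∈ D₁} × {x // x ∈ D₂} × {x // x ∈ D₃}) → ZMod 2) :=
  LinearMap.pi fun d =>
    (dotL d.1.1).comp (LinearMap.fst (ZMod 2) (V m) (V m × V m))
    + (dotL d.2.1.1).comp
        (((LinearMap.fst (ZMod 2) (V m) (V m)).comp (LinearMap.snd (ZMod 2) (V m) (V m × V m)))
          + ((LinearMap.snd (ZMod 2) (V m) (V m)).comp (LinearMap.snd (ZMod 2) (V m) (V m × V m))))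
    + (dotL d.2.2.1).comp
        ((LinearMap.fst (ZMod 2) (V m) (V m)).comp (LinearMap.snd (ZMod 2) (V m) (V m × V m)))

lemma codeMap_apply {m : ℕ} (D₁ D₂ D₃ : Finset (V m)) (α β γ : V m)
    (d : {x // x ∈ D₁} × {x // x ∈ D₂} × {x // x ∈ D₃}) :
    codeMap D₁ D₂ D₃ (α, β, γ) d = dot α d.1.1 + dot (β + γ) d.2.1.1 + dot β d.2.2.1 := by
  simp [codeMap, dotL, dot, LinearMap.smulRight, mul_comm]

/-- A binary linear code (given as a set of codewords) is minimal if the support of a nonzero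
codeword never strictly contains the support of another nonzero codeword. -/
def IsMinimalCode {ι : Type} (C : Set (ι → ZMod 2)) : Prop :=
  ∀ u ∈ C, u ≠ 0 → ∀ v ∈ C, v ≠ 0 → Function.support v ⊆ Function.support u → v = u

/-- A binary code is self-orthogonal if any two codewords are orthogonal. -/
def IsSelfOrthogonal {ι : Type} [Fintype ι] (C : Set (ι → ZMod 2)) : Prop :=
  ∀ c ∈ C, ∀ c' ∈ C, ∑ i, c i * c' i = 0

variable {m : ℕ}

lemma zmod2_cases (a : ZMod 2) : a = 0 ∨ a = 1 := by fin_cases a; exacts [Or.inl rfl, Or.inr rfl]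

lemma mem_Δ {S : Finset (Fin m)} {v : V m} : v ∈ Δ S ↔ ∀ i, i ∉ S → v i = 0 := by
  simp only [Δ, Finset.mem_filter, Finset.mem_univ, true_and, supp, Finset.subset_iff,
    Finset.mem_filter, Finset.mem_univ, true_and]
  constructor
  · intro h i hi; by_contra hv; exact hi (h hv)
  · intro h i hv; by_contra hi; exact hv (h i hi)

lemma dot_add_right (x v w : V m) : dot x (v + w) = dot x v + dot x w := by
  simp [dot, mul_add, Finset.sum_add_distrib]

lemma dot_single (x : V m) (i : Fin m) : dot x (Pi.single i 1) = x i := by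
  rw [dot, Finset.sum_eq_single i]
  · simp
  · intro j _ hj; simp [Pi.single_apply, hj]
  · simp

lemma dot_eq_zero_of {S : Finset (Fin m)} {x v : V m} (hx : ∀ i ∈ S, x i = 0)
    (hv : v ∈ Δ S) : dot x v = 0 := by
  rw [dot]
  apply Finset.sum_eq_zero
  intro i _
  by_cases hi : i ∈ S
  · rw [hx i hi, zero_mul]
  · rw [mem_Δ.1 hv i hi, mul_zero]

lemma card_Δ (S : Finset (Fin m)) : (Δ S).card = 2 ^ S.card := by
  classical
  have : (Δ S).card = (Finset.univ : Finset (↥S → ZMod 2)).card := by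
    apply Finset.card_nbij' (fun v => fun i : ↥S => v i)
      (fun f => fun i : Fin m => if h : i ∈ S then f ⟨i, h⟩ else 0)
    · intro v hv; exact Finset.mem_univ _
    · intro f _
      rw [Finset.mem_coe, mem_Δ]; intro i hi; simp [hi]
    · intro v hv
      funext i
      by_cases h : i ∈ S
      · simp [h]
      · simp [h, mem_Δ.1 hv i h]
    · intro f _; funext i; simp
  rw [this, Finset.card_univ, Fintype.card_fun]
  simp
lemma single_add_single_self (i₀ : Fin m) :
    (Pi.single i₀ 1 : V m) + Pi.single i₀ 1 = 0 := by
  have h : (1 + 1 : ZMod 2) = 0 := by decide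
  rw [← Pi.single_add, h, Pi.single_zero]

lemma count_dot (S : Finset (Fin m)) (x : V m) :
    ((Δ S).filter fun v => dot x v = 1).card
      = if ∀ i ∈ S, x i = 0 then 0 else 2 ^ (S.card - 1) := by
  split
  · next h =>
    rw [Finset.card_eq_zero, Finset.filter_eq_empty_iff]
    intro v hv
    rw [dot_eq_zero_of h hv]
    decide
  · next h =>
    push_neg at h
    obtain ⟨i₀, hi₀, hxi⟩ := h
    have hx1 : x i₀ = 1 := (zmod2_cases _).resolve_left hxi
    set e : V m := Pi.single i₀ 1 with he_def
    have hdot_e : ∀ v : V m, dot x (v + e) = dot x v + 1 := by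
      intro v; rw [dot_add_right, he_def, dot_single, hx1]
    have hmem : ∀ v ∈ Δ S, v + e ∈ Δ S := by
      intro v hv
      rw [mem_Δ] at hv ⊢
      intro i hi
      have hie : e i = 0 := by
        rw [he_def, Pi.single_apply, if_neg]
        rintro rfl; exact hi hi₀
      simp [hv i hi, hie]
    have hinv : ∀ v : V m, v + e + e = v := by
      intro v; rw [add_assoc, single_add_single_self, add_zero]
    have key : ((Δ S).filter fun v => dot x v = 1).card
        = ((Δ S).filter fun v => dot x v = 0).card := by
      apply Finset.card_nbij' (fun v => v + e) (fun v => v + e)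
      · intro v hv
        rw [Finset.mem_coe, Finset.mem_filter] at hv ⊢
        exact ⟨hmem v hv.1, by rw [hdot_e, hv.2]; decide⟩
      · intro v hv
        rw [Finset.mem_coe, Finset.mem_filter] at hv ⊢
        exact ⟨hmem v hv.1, by rw [hdot_e, hv.2]; decide⟩
      · intro v _; exact hinv v
      · intro v _; exact hinv v
    have hneg : ((Δ S).filter fun v => ¬ dot x v = 1).card
        = ((Δ S).filter fun v => dot x v = 0).card := by
      congr 1
      apply Finset.filter_congr
      intro v _
      rcases zmod2_cases (dot x v) with h | h <;> simp [h]
    have htot := Finset.card_filter_add_card_filter_not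
      (s := Δ S) (p := fun v => dot x v = 1)
    rw [hneg, ← key, card_Δ] at htot
    have hS1 : 1 ≤ S.card := Finset.card_pos.2 ⟨i₀, hi₀⟩
    have h2 : 2 ^ S.card = 2 * 2 ^ (S.card - 1) := by
      rw [← pow_succ']
      congr 1
      omega
    omega

lemma Δ_mono {S T : Finset (Fin m)} (h : S ⊆ T) : Δ S ⊆ Δ T := by
  intro v hv
  rw [mem_Δ] at hv ⊢
  intro i hi
  exact hv i (fun hS => hi (h hS))

lemma sum_Δ_split {R : Type*} [AddCommMonoid R] {S : Finset (Fin m)} {i₀ : Fin m}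
    (hi₀ : i₀ ∈ S) (f : V m → R) :
    ∑ v ∈ Δ S, f v = ∑ v ∈ Δ (S.erase i₀), f v
      + ∑ v ∈ Δ (S.erase i₀), f (v + Pi.single i₀ 1) := by
  set e : V m := Pi.single i₀ 1 with he_def
  set S' := S.erase i₀ with hS'
  have hinv : ∀ v : V m, v + e + e = v := by
    intro v; rw [add_assoc, single_add_single_self, add_zero]
  have hei₀ : e i₀ = 1 := by rw [he_def]; simp
  have henot : ∀ i, i ≠ i₀ → e i = 0 := by
    intro i hii; rw [he_def, Pi.single_apply, if_neg hii]
  have hnotmem : ∀ i, i ∉ S' ↔ (i = i₀ ∨ i ∉ S) := by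
    intro i
    rw [hS', Finset.mem_erase]
    by_cases h : i = i₀ <;> by_cases h2 : i ∈ S <;> simp [h, h2]
  have hvz : ∀ v ∈ Δ S', v i₀ = 0 :=
    fun v hv => mem_Δ.1 hv i₀ (Finset.notMem_erase _ _)
  have hunion : Δ S = Δ S' ∪ (Δ S').image (· + e) := by
    ext v
    rw [Finset.mem_union, Finset.mem_image]
    constructor
    · intro hv
      by_cases h0 : v i₀ = 0
      · left
        rw [mem_Δ] at hv ⊢
        intro i hi
        rcases (hnotmem i).1 hi with h | h
        · exact h ▸ h0
        · exact hv i h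
      · right
        refine ⟨v + e, ?_, hinv v⟩
        rw [mem_Δ] at hv ⊢
        intro i hi
        rcases (hnotmem i).1 hi with h | h
        · subst h
          have hv1 : v i = 1 := (zmod2_cases _).resolve_left h0
          show v i + e i = 0
          rw [hv1, hei₀]; decide
        · simp [hv i h, henot i (fun he => (he ▸ h) hi₀)]
    · rintro (hv | ⟨w, hw, rfl⟩)
      · exact Δ_mono (Finset.erase_subset _ _) hv
      · rw [mem_Δ] at hw ⊢
        intro i hi
        have hii : i ≠ i₀ := fun h => hi (h ▸ hi₀)
        simp [hw i ((hnotmem i).2 (Or.inr hi)), henot i hii]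
  have hdisj : Disjoint (Δ S') ((Δ S').image (· + e)) := by
    rw [Finset.disjoint_left]
    intro v hv hv2
    obtain ⟨w, hw, rfl⟩ := Finset.mem_image.1 hv2
    have h1 : (w + e) i₀ = 1 := by simp [hvz w hw, hei₀]
    rw [hvz _ hv] at h1
    exact one_ne_zero h1.symm
  have hinj : Set.InjOn (· + e) (Δ S') := fun a _ b _ h => by
    have := congrArg (· + e) h
    simpa [hinv] using this
  rw [hunion, Finset.sum_union hdisj, Finset.sum_image (fun a ha b hb h => hinj ha hb h)]

lemma two_pow_zmod (k : ℕ) (hk : 1 ≤ k) : ((2 ^ k : ℕ) : ZMod 2) = 0 := by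
  obtain ⟨j, rfl⟩ := Nat.exists_eq_add_of_le hk
  push_cast
  rw [pow_add, pow_one]
  norm_num
  left; decide

lemma card_Δ_zmod {S : Finset (Fin m)} (h : 1 ≤ S.card) : ((Δ S).card : ZMod 2) = 0 := by
  rw [card_Δ]; exact two_pow_zmod _ h

lemma sum_dot_zero {S : Finset (Fin m)} (x : V m) (h : 2 ≤ S.card) :
    ∑ v ∈ Δ S, dot x v = 0 := by
  have hpos : 0 < S.card := by omega
  obtain ⟨i₀, hi₀⟩ := Finset.card_pos.1 hpos
  rw [sum_Δ_split hi₀]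
  have h1 : ∀ v ∈ Δ (S.erase i₀), dot x (v + Pi.single i₀ 1) = dot x v + x i₀ := by
    intro v _; rw [dot_add_right, dot_single]
  rw [Finset.sum_congr rfl h1, Finset.sum_add_distrib, Finset.sum_const]
  have hc : (Δ (S.erase i₀)).card • x i₀ = 0 := by
    rw [← Nat.cast_smul_eq_nsmul (ZMod 2), card_Δ_zmod (by rw [Finset.card_erase_of_mem hi₀]; omega), zero_smul]
  rw [hc, add_zero, ← Finset.sum_add_distrib]
  apply Finset.sum_eq_zero
  intro v _
  exact CharTwo.add_self_eq_zero _

lemma sum_dot_mul_zero {S : Finset (Fin m)} (x y : V m) (h : 3 ≤ S.card) :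
    ∑ v ∈ Δ S, dot x v * dot y v = 0 := by
  have hpos : 0 < S.card := by omega
  obtain ⟨i₀, hi₀⟩ := Finset.card_pos.1 hpos
  have hcard' : 2 ≤ (S.erase i₀).card := by rw [Finset.card_erase_of_mem hi₀]; omega
  rw [sum_Δ_split hi₀]
  have h1 : ∀ v ∈ Δ (S.erase i₀), dot x (v + Pi.single i₀ 1) * dot y (v + Pi.single i₀ 1)
      = dot x v * dot y v + (x i₀ * dot y v + (y i₀ * dot x v + x i₀ * y i₀)) := by
    intro v _; rw [dot_add_right, dot_single, dot_add_right, dot_single]; ring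
  rw [Finset.sum_congr rfl h1, Finset.sum_add_distrib, Finset.sum_add_distrib,
    Finset.sum_add_distrib, ← Finset.mul_sum, ← Finset.mul_sum, Finset.sum_const,
    sum_dot_zero y hcard', sum_dot_zero x hcard', mul_zero, mul_zero]
  have hc : (Δ (S.erase i₀)).card • (x i₀ * y i₀) = 0 := by
    rw [← Nat.cast_smul_eq_nsmul (ZMod 2), card_Δ_zmod (by omega), zero_smul]
  rw [hc, zero_add, zero_add, add_zero, ← Finset.sum_add_distrib]
  apply Finset.sum_eq_zero
  intro v _
  exact CharTwo.add_self_eq_zero _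

lemma filter_zero_card {σ : Type*} [Fintype σ] (s : Finset σ) (f : σ → ZMod 2) :
    (s.filter fun v => f v = 0).card = s.card - (s.filter fun v => f v = 1).card := by
  have hneg : (s.filter fun v => ¬ f v = 1).card = (s.filter fun v => f v = 0).card := by
    congr 1
    apply Finset.filter_congr
    intro v _
    rcases zmod2_cases (f v) with h | h <;> simp [h]
  have htot := Finset.card_filter_add_card_filter_not (s := s) (p := fun v => f v = 1)
  omega

lemma sum_fiber {σ : Type*} (s : Finset σ) (A : σ → ZMod 2) (g : ZMod 2 → ℕ) :
    ∑ d ∈ s, g (A d) = (s.filter fun d => A d = 1).card * g 1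
      + (s.filter fun d => A d = 0).card * g 0 := by
  rw [← Finset.sum_filter_add_sum_filter_not s (fun d => A d = 1)]
  have h1 : ∑ d ∈ s.filter (fun d => A d = 1), g (A d)
      = (s.filter fun d => A d = 1).card * g 1 := by
    rw [Finset.sum_congr rfl (fun d hd => by rw [(Finset.mem_filter.1 hd).2]),
      Finset.sum_const, smul_eq_mul]
  have h2 : ∑ d ∈ s.filter (fun d => ¬ A d = 1), g (A d)
      = (s.filter fun d => ¬ A d = 1).card * g 0 := by
    rw [Finset.sum_congr rfl (fun d hd =>
        by rw [(zmod2_cases (A d)).resolve_right (Finset.mem_filter.1 hd).2]),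
      Finset.sum_const, smul_eq_mul]
  have h3 : (s.filter fun d => ¬ A d = 1) = (s.filter fun d => A d = 0) := by
    apply Finset.filter_congr
    intro v _
    rcases zmod2_cases (A v) with h | h <;> simp [h]
  rw [h1, h2, h3]

lemma inner_count {σ : Type*} (s : Finset σ) (C : σ → ZMod 2) (t : ZMod 2) :
    ∑ v ∈ s, (if t + C v = 1 then 1 else 0 : ℕ)
      = if t = 0 then (s.filter fun v => C v = 1).card
        else (s.filter fun v => C v = 0).card := by
  rcases zmod2_cases t with h | h <;> subst h
  · simp only [zero_add, if_pos rfl]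
    exact (Finset.card_filter _ _).symm
  · rw [if_neg (by decide)]
    have : ∀ v : σ, (1 + C v = 1) = (C v = 0) := by
      intro v
      rcases zmod2_cases (C v) with h | h <;> simp [h]
    simp only [this]
    exact (Finset.card_filter _ _).symm

lemma triple_count (s₁ s₂ s₃ : Finset (V m)) (A B C : V m → ZMod 2) :
    ∑ v₁ ∈ s₁, ∑ v₂ ∈ s₂, ∑ v₃ ∈ s₃, (if A v₁ + B v₂ + C v₃ = 1 then 1 else 0 : ℕ)
      = (s₁.filter fun v => A v = 1).card *
          ((s₂.filter fun v => B v = 1).card * (s₃.filter fun v => C v = 1).card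
            + (s₂.filter fun v => B v = 0).card * (s₃.filter fun v => C v = 0).card)
        + (s₁.filter fun v => A v = 0).card *
          ((s₂.filter fun v => B v = 1).card * (s₃.filter fun v => C v = 0).card
            + (s₂.filter fun v => B v = 0).card * (s₃.filter fun v => C v = 1).card) := by
  have hstep1 : ∀ v₁, ∑ v₂ ∈ s₂, ∑ v₃ ∈ s₃, (if A v₁ + B v₂ + C v₃ = 1 then 1 else 0 : ℕ)
      = ∑ v₂ ∈ s₂, (if A v₁ + B v₂ = 0 then (s₃.filter fun v => C v = 1).card
          else (s₃.filter fun v => C v = 0).card) := by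
    intro v₁
    refine Finset.sum_congr rfl fun v₂ _ => ?_
    have h := inner_count s₃ C (A v₁ + B v₂)
    simp only [add_assoc] at h ⊢
    exact h
  have hstep2 : ∀ v₁, ∑ v₂ ∈ s₂, (if A v₁ + B v₂ = 0 then (s₃.filter fun v => C v = 1).card
          else (s₃.filter fun v => C v = 0).card)
      = (if A v₁ = 1 then
          ((s₂.filter fun v => B v = 1).card * (s₃.filter fun v => C v = 1).card
            + (s₂.filter fun v => B v = 0).card * (s₃.filter fun v => C v = 0).card)
        else
          ((s₂.filter fun v => B v = 1).card * (s₃.filter fun v => C v = 0).card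
            + (s₂.filter fun v => B v = 0).card * (s₃.filter fun v => C v = 1).card)) := by
    intro v₁
    rw [sum_fiber s₂ B (fun b => if A v₁ + b = 0 then (s₃.filter fun v => C v = 1).card
          else (s₃.filter fun v => C v = 0).card)]
    rcases zmod2_cases (A v₁) with h | h
    · rw [h, if_neg (by decide : ¬(0:ZMod 2) = 1), if_neg (by decide : ¬(0+1 : ZMod 2) = 0),
        if_pos (by decide : (0+0 : ZMod 2) = 0)]
    · rw [h, if_pos rfl, if_neg (by decide : ¬(1+0 : ZMod 2) = 0),
        if_pos (by decide : (1+1 : ZMod 2) = 0)]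
  calc ∑ v₁ ∈ s₁, ∑ v₂ ∈ s₂, ∑ v₃ ∈ s₃, (if A v₁ + B v₂ + C v₃ = 1 then 1 else 0 : ℕ)
      = ∑ v₁ ∈ s₁, (if A v₁ = 1 then
          ((s₂.filter fun v => B v = 1).card * (s₃.filter fun v => C v = 1).card
            + (s₂.filter fun v => B v = 0).card * (s₃.filter fun v => C v = 0).card)
        else
          ((s₂.filter fun v => B v = 1).card * (s₃.filter fun v => C v = 0).card
            + (s₂.filter fun v => B v = 0).card * (s₃.filter fun v => C v = 1).card)) := by
        refine Finset.sum_congr rfl fun v₁ _ => ?_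
        rw [hstep1 v₁, hstep2 v₁]
    _ = _ := by
        rw [sum_fiber s₁ A (fun a => if a = 1 then _ else _)]
        norm_num

lemma dot_zero_left (y : V m) : dot (0 : V m) y = 0 := by simp [dot]

lemma Δ_univ : Δ (Finset.univ : Finset (Fin m)) = Finset.univ := by
  ext v; simp [mem_Δ]

lemma wtv_codeMap (D₁ D₂ D₃ : Finset (V m)) (α β γ : V m) :
    wtv (codeMap D₁ D₂ D₃ (α, β, γ))
      = ∑ v₁ ∈ D₁, ∑ v₂ ∈ D₂, ∑ v₃ ∈ D₃,
          (if dot α v₁ + dot (β + γ) v₂ + dot β v₃ = 1 then 1 else 0 : ℕ) := by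
  classical
  rw [wtv, Finset.card_filter]
  have h1 : ∀ i : ({x // x ∈ D₁} × {x // x ∈ D₂} × {x // x ∈ D₃}),
      (if codeMap D₁ D₂ D₃ (α, β, γ) i ≠ 0 then 1 else 0 : ℕ)
        = (if dot α i.1.1 + dot (β + γ) i.2.1.1 + dot β i.2.2.1 = 1 then 1 else 0) := by
    intro i
    rw [codeMap_apply]
    congr 1
    rcases zmod2_cases (dot α i.1.1 + dot (β + γ) i.2.1.1 + dot β i.2.2.1) with h | h <;>
      simp [h]
  rw [Finset.sum_congr rfl (fun i _ => h1 i)]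
  rw [Fintype.sum_prod_type]
  simp only [Fintype.sum_prod_type]
  rw [← Finset.sum_coe_sort D₁ (fun v₁ => ∑ v₂ ∈ D₂, ∑ v₃ ∈ D₃,
    (if dot α v₁ + dot (β + γ) v₂ + dot β v₃ = 1 then 1 else 0 : ℕ))]
  refine Finset.sum_congr rfl fun x _ => ?_
  rw [← Finset.sum_coe_sort D₂ (fun v₂ => ∑ v₃ ∈ D₃,
    (if dot α ↑x + dot (β + γ) v₂ + dot β v₃ = 1 then 1 else 0 : ℕ))]
  refine Finset.sum_congr rfl fun x1 _ => ?_
  rw [← Finset.sum_coe_sort D₃ (fun v₃ =>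
    (if dot α ↑x + dot (β + γ) ↑x1 + dot β v₃ = 1 then 1 else 0 : ℕ))]

lemma count_split (L : Finset (Fin m)) (α : V m) :
    ((Finset.univ : Finset (V m)).filter fun v => dot α v = 1).card
      = ((Δ L).filter fun v => dot α v = 1).card
        + (((Δ L)ᶜ).filter fun v => dot α v = 1).card := by
  rw [← Finset.card_union_of_disjoint
    (Finset.disjoint_filter_filter disjoint_compl_right), ← Finset.filter_union,
    Finset.union_compl]

lemma count_univ (α : V m) (hα : α ≠ 0) :
    ((Finset.univ : Finset (V m)).filter fun v => dot α v = 1).card = 2 ^ (m - 1) := by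
  rw [← Δ_univ, count_dot, if_neg]
  · rw [Finset.card_univ, Fintype.card_fin]
  · intro h
    apply hα
    funext i
    exact h i (Finset.mem_univ i)

lemma wt_bounds (hm : 1 ≤ m) (L M N : Finset (Fin m)) (α β γ : V m)
    (hne : codeMap (Δ L)ᶜ (Δ M) (Δ N) (α, β, γ) ≠ 0) :
    (2 ^ m - 2 ^ L.card) * 2 ^ (M.card + N.card)
        ≤ 2 * wtv (codeMap (Δ L)ᶜ (Δ M) (Δ N) (α, β, γ)) ∧
      2 * wtv (codeMap (Δ L)ᶜ (Δ M) (Δ N) (α, β, γ)) ≤ 2 ^ (m + M.card + N.card) := by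
  classical
  have hle : (2 ^ m - 2 ^ L.card) * 2 ^ (M.card + N.card) ≤ 2 ^ (m + M.card + N.card) := by
    have h1 : 2 ^ (m + M.card + N.card) = 2 ^ m * 2 ^ (M.card + N.card) := by
      rw [add_assoc, pow_add]
    rw [h1]
    exact Nat.mul_le_mul_right _ (Nat.sub_le _ _)
  rw [wtv_codeMap, triple_count ((Δ L)ᶜ) (Δ M) (Δ N)
    (fun v => dot α v) (fun v => dot (β + γ) v) (fun v => dot β v)]
  set a₁ := (((Δ L)ᶜ).filter fun v => dot α v = 1).card with ha₁
  set a₀ := (((Δ L)ᶜ).filter fun v => dot α v = 0).card with ha₀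
  set b₁ := ((Δ M).filter fun v => dot (β + γ) v = 1).card with hb₁
  set b₀ := ((Δ M).filter fun v => dot (β + γ) v = 0).card with hb₀
  set c₁ := ((Δ N).filter fun v => dot β v = 1).card with hc₁
  set c₀ := ((Δ N).filter fun v => dot β v = 0).card with hc₀
  have hb₁le : b₁ ≤ 2 ^ M.card := by
    rw [hb₁, ← card_Δ M]; exact Finset.card_filter_le _ _
  have hc₁le : c₁ ≤ 2 ^ N.card := by
    rw [hc₁, ← card_Δ N]; exact Finset.card_filter_le _ _
  have hb₀' : b₀ = 2 ^ M.card - b₁ := by rw [hb₀, filter_zero_card, card_Δ, hb₁]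
  have hc₀' : c₀ = 2 ^ N.card - c₁ := by rw [hc₀, filter_zero_card, card_Δ, hc₁]
  have hbsum : b₁ + b₀ = 2 ^ M.card := by omega
  have hcsum : c₁ + c₀ = 2 ^ N.card := by omega
  have hcardc : (Δ L)ᶜ.card = 2 ^ m - 2 ^ L.card := by
    rw [Finset.card_compl, card_Δ, Fintype.card_fun, Fintype.card_fin]; rfl
  have ha₀' : a₀ = (2 ^ m - 2 ^ L.card) - a₁ := by
    rw [ha₀, filter_zero_card, ha₁, hcardc]
  have ha₁le : a₁ ≤ 2 ^ m - 2 ^ L.card := by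
    rw [ha₁, ← hcardc]; exact Finset.card_filter_le _ _
  have hasum : a₁ + a₀ = 2 ^ m - 2 ^ L.card := by omega
  by_cases hPx : ∀ i ∈ M, (β + γ) i = 0
  · by_cases hPβ : ∀ i ∈ N, β i = 0
    · -- both vanish; α must be nonzero
      have hα : α ≠ 0 := by
        intro h0
        apply hne
        funext d
        rw [codeMap_apply, h0, dot_zero_left,
          dot_eq_zero_of hPx d.2.1.2, dot_eq_zero_of hPβ d.2.2.2]
        rfl
      have hb₁' : b₁ = 0 := by rw [hb₁, count_dot, if_pos hPx]
      have hc₁' : c₁ = 0 := by rw [hc₁, count_dot, if_pos hPβ]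
      have hb₀'' : b₀ = 2 ^ M.card := by omega
      have hc₀'' : c₀ = 2 ^ N.card := by omega
      have ha₁' : a₁ = 2 ^ (m - 1)
          - ((Δ L).filter fun v => dot α v = 1).card := by
        have := count_split L α
        rw [count_univ α hα] at this
        omega
      have hm2 : 2 ^ m = 2 * 2 ^ (m - 1) := by
        rw [← pow_succ']; congr 1; omega
      by_cases hQα : ∀ i ∈ L, α i = 0
      · have ha : a₁ = 2 ^ (m - 1) := by
          rw [ha₁', count_dot, if_pos hQα]; omega
        have hE : 2 * (a₁ * (b₁ * c₁ + b₀ * c₀) + a₀ * (b₁ * c₀ + b₀ * c₁))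
            = 2 ^ (m + M.card + N.card) := by
          rw [hb₁', hc₁', hb₀'', hc₀'', ha, add_assoc, pow_add, pow_add, hm2]
          ring
        rw [hE]
        exact ⟨hle, le_refl _⟩
      · push_neg at hQα
        obtain ⟨i, hiL, hαi⟩ := hQα
        have hL1 : 1 ≤ L.card := Finset.card_pos.2 ⟨i, hiL⟩
        have hLm : L.card ≤ m := by
          have := Finset.card_le_univ L
          rwa [Fintype.card_fin] at this
        have hl2 : 2 ^ L.card = 2 * 2 ^ (L.card - 1) := by
          rw [← pow_succ']; congr 1; omega
        have ha : a₁ = 2 ^ (m - 1) - 2 ^ (L.card - 1) := by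
          rw [ha₁', count_dot, if_neg (by push_neg; exact ⟨i, hiL, hαi⟩)]
        have hpowle : 2 ^ (L.card - 1) ≤ 2 ^ (m - 1) :=
          Nat.pow_le_pow_right (by norm_num) (by omega)
        have h2a : 2 * a₁ = 2 ^ m - 2 ^ L.card := by omega
        have hE : 2 * (a₁ * (b₁ * c₁ + b₀ * c₀) + a₀ * (b₁ * c₀ + b₀ * c₁))
            = (2 ^ m - 2 ^ L.card) * 2 ^ (M.card + N.card) := by
          rw [hb₁', hc₁', hb₀'', hc₀'']
          calc 2 * (a₁ * (0 * 0 + 2 ^ M.card * 2 ^ N.card)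
                + a₀ * (0 * 2 ^ N.card + 2 ^ M.card * 0))
              = (2 * a₁) * (2 ^ M.card * 2 ^ N.card) := by ring
            _ = (2 ^ m - 2 ^ L.card) * 2 ^ (M.card + N.card) := by
                rw [h2a, pow_add]
        rw [hE]
        exact ⟨le_refl _, hle⟩
    · -- β nonvanishing on N
      push_neg at hPβ
      obtain ⟨i, hiN, hβi⟩ := hPβ
      have hN1 : 1 ≤ N.card := Finset.card_pos.2 ⟨i, hiN⟩
      have hn2 : 2 ^ N.card = 2 * 2 ^ (N.card - 1) := by
        rw [← pow_succ']; congr 1; omega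
      have hc₁' : c₁ = 2 ^ (N.card - 1) := by
        rw [hc₁, count_dot, if_neg (by push_neg; exact ⟨i, hiN, hβi⟩)]
      have hc₀'' : c₀ = 2 ^ (N.card - 1) := by omega
      have hE : 2 * (a₁ * (b₁ * c₁ + b₀ * c₀) + a₀ * (b₁ * c₀ + b₀ * c₁))
          = (2 ^ m - 2 ^ L.card) * 2 ^ (M.card + N.card) := by
        rw [hc₁', hc₀'']
        calc 2 * (a₁ * (b₁ * 2 ^ (N.card - 1) + b₀ * 2 ^ (N.card - 1))
              + a₀ * (b₁ * 2 ^ (N.card - 1) + b₀ * 2 ^ (N.card - 1)))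
            = (a₁ + a₀) * (b₁ + b₀) * (2 * 2 ^ (N.card - 1)) := by ring
          _ = (2 ^ m - 2 ^ L.card) * 2 ^ (M.card + N.card) := by
              rw [hasum, hbsum, ← hn2, pow_add, mul_assoc]
      rw [hE]
      exact ⟨le_refl _, hle⟩
  · -- β+γ nonvanishing on M
    push_neg at hPx
    obtain ⟨i, hiM, hxi⟩ := hPx
    have hM1 : 1 ≤ M.card := Finset.card_pos.2 ⟨i, hiM⟩
    have hn2 : 2 ^ M.card = 2 * 2 ^ (M.card - 1) := by
      rw [← pow_succ']; congr 1; omega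
    have hb₁' : b₁ = 2 ^ (M.card - 1) := by
      rw [hb₁, count_dot, if_neg (by push_neg; exact ⟨i, hiM, hxi⟩)]
    have hb₀'' : b₀ = 2 ^ (M.card - 1) := by omega
    have hE : 2 * (a₁ * (b₁ * c₁ + b₀ * c₀) + a₀ * (b₁ * c₀ + b₀ * c₁))
        = (2 ^ m - 2 ^ L.card) * 2 ^ (M.card + N.card) := by
      rw [hb₁', hb₀'']
      calc 2 * (a₁ * (2 ^ (M.card - 1) * c₁ + 2 ^ (M.card - 1) * c₀)
            + a₀ * (2 ^ (M.card - 1) * c₀ + 2 ^ (M.card - 1) * c₁))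
          = (a₁ + a₀) * (2 * 2 ^ (M.card - 1)) * (c₁ + c₀) := by ring
        _ = (2 ^ m - 2 ^ L.card) * 2 ^ (M.card + N.card) := by
            rw [hasum, hcsum, ← hn2, pow_add, ← mul_assoc]
    rw [hE]
    exact ⟨le_refl _, hle⟩

lemma triple_expand (s₁ s₂ s₃ : Finset (V m)) (A A' B B' C C' : V m → ZMod 2) :
    ∑ v₁ ∈ s₁, ∑ v₂ ∈ s₂, ∑ v₃ ∈ s₃,
        (A v₁ + B v₂ + C v₃) * (A' v₁ + B' v₂ + C' v₃)
      = (s₂.card : ZMod 2) * (s₃.card : ZMod 2) * (∑ v₁ ∈ s₁, A v₁ * A' v₁)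
        + (s₃.card : ZMod 2) * (∑ v₁ ∈ s₁, A v₁) * (∑ v₂ ∈ s₂, B' v₂)
        + (s₂.card : ZMod 2) * (∑ v₁ ∈ s₁, A v₁) * (∑ v₃ ∈ s₃, C' v₃)
        + (s₃.card : ZMod 2) * (∑ v₂ ∈ s₂, B v₂) * (∑ v₁ ∈ s₁, A' v₁)
        + (s₁.card : ZMod 2) * (s₃.card : ZMod 2) * (∑ v₂ ∈ s₂, B v₂ * B' v₂)
        + (s₁.card : ZMod 2) * (∑ v₂ ∈ s₂, B v₂) * (∑ v₃ ∈ s₃, C' v₃)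
        + (s₂.card : ZMod 2) * (∑ v₃ ∈ s₃, C v₃) * (∑ v₁ ∈ s₁, A' v₁)
        + (s₁.card : ZMod 2) * (∑ v₃ ∈ s₃, C v₃) * (∑ v₂ ∈ s₂, B' v₂)
        + (s₁.card : ZMod 2) * (s₂.card : ZMod 2) * (∑ v₃ ∈ s₃, C v₃ * C' v₃) := by
  have hpull : ∀ (s : Finset (V m)) (c : ZMod 2) (f g : V m → ZMod 2),
      ∑ x ∈ s, c * f x * g x = c * ∑ x ∈ s, f x * g x := by
    intro s c f g
    rw [Finset.mul_sum]
    exact Finset.sum_congr rfl fun x _ => by ring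
  simp only [add_mul, mul_add, Finset.sum_add_distrib, ← Finset.mul_sum, ← Finset.sum_mul,
    Finset.sum_const, nsmul_eq_mul]
  ring_nf
  simp only [← Finset.mul_sum, ← Finset.sum_mul, mul_comm, mul_left_comm, mul_assoc]
  ring_nf
  simp only [hpull]
  ring_nf

lemma wtv_add {ι : Type} [Fintype ι] (u v : ι → ZMod 2)
    (h : Function.support v ⊆ Function.support u) : wtv u = wtv v + wtv (u + v) := by
  classical
  rw [wtv, wtv, wtv, Finset.card_filter, Finset.card_filter, Finset.card_filter,
    ← Finset.sum_add_distrib]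
  refine Finset.sum_congr rfl fun i _ => ?_
  by_cases hv : v i = 0
  · simp [hv]
  · have hu : u i ≠ 0 := h hv
    have hv1 : v i = 1 := (zmod2_cases _).resolve_left hv
    have hu1 : u i = 1 := (zmod2_cases _).resolve_left hu
    simp [Pi.add_apply, hv1, hu1, show (1:ZMod 2) + 1 = 0 from by decide]

lemma orth_sum_eq (D₁ D₂ D₃ : Finset (V m)) (α β γ α' β' γ' : V m) :
    ∑ i, (codeMap D₁ D₂ D₃ (α, β, γ)) i * (codeMap D₁ D₂ D₃ (α', β', γ')) i
      = ∑ v₁ ∈ D₁, ∑ v₂ ∈ D₂, ∑ v₃ ∈ D₃,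
          (dot α v₁ + dot (β + γ) v₂ + dot β v₃)
            * (dot α' v₁ + dot (β' + γ') v₂ + dot β' v₃) := by
  classical
  have h1 : ∀ i : ({x // x ∈ D₁} × {x // x ∈ D₂} × {x // x ∈ D₃}),
      (codeMap D₁ D₂ D₃ (α, β, γ)) i * (codeMap D₁ D₂ D₃ (α', β', γ')) i
        = (dot α i.1.1 + dot (β + γ) i.2.1.1 + dot β i.2.2.1)
            * (dot α' i.1.1 + dot (β' + γ') i.2.1.1 + dot β' i.2.2.1) := by
    intro i
    rw [codeMap_apply, codeMap_apply]
  rw [Finset.sum_congr rfl (fun i _ => h1 i)]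
  rw [Fintype.sum_prod_type]
  simp only [Fintype.sum_prod_type]
  rw [← Finset.sum_coe_sort D₁ (fun v₁ => ∑ v₂ ∈ D₂, ∑ v₃ ∈ D₃,
    (dot α v₁ + dot (β + γ) v₂ + dot β v₃)
      * (dot α' v₁ + dot (β' + γ') v₂ + dot β' v₃))]
  refine Finset.sum_congr rfl fun x _ => ?_
  rw [← Finset.sum_coe_sort D₂ (fun v₂ => ∑ v₃ ∈ D₃,
    (dot α ↑x + dot (β + γ) v₂ + dot β v₃)
      * (dot α' ↑x + dot (β' + γ') v₂ + dot β' v₃))]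
  refine Finset.sum_congr rfl fun x1 _ => ?_
  rw [← Finset.sum_coe_sort D₃ (fun v₃ =>
    (dot α ↑x + dot (β + γ) ↑x1 + dot β v₃)
      * (dot α' ↑x + dot (β' + γ') ↑x1 + dot β' v₃))]

/-- Theorem 4.2, row 2: if `|L| ≤ m − 2` then `C(Δ_L^c, Δ_M, Δ_N)` is
minimal, and if `|M|+|N| ≥ 3` it is self-orthogonal. -/
theorem stmt15 (m : ℕ) (hm : 1 ≤ m) (L M N : Finset (Fin m))
    (hL : L ⊂ Finset.univ) :
    (L.card + 2 ≤ m →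
      IsMinimalCode (SetLike.coe (LinearMap.range (codeMap (Δ L)ᶜ (Δ M) (Δ N))))) ∧
    (3 ≤ M.card + N.card →
      IsSelfOrthogonal (SetLike.coe (LinearMap.range (codeMap (Δ L)ᶜ (Δ M) (Δ N))))) := by
  constructor
  · -- minimality
    intro hcard u hu hune v hv hvne hsupp
    by_contra hneq
    rw [SetLike.mem_coe, LinearMap.mem_range] at hu hv
    obtain ⟨⟨α, β, γ⟩, rfl⟩ := hu
    obtain ⟨⟨α', β', γ'⟩, rfl⟩ := hv
    have hw_eq : codeMap (Δ L)ᶜ (Δ M) (Δ N) (α + α', β + β', γ + γ')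
        = codeMap (Δ L)ᶜ (Δ M) (Δ N) (α, β, γ) + codeMap (Δ L)ᶜ (Δ M) (Δ N) (α', β', γ') := by
      rw [← map_add]
      rfl
    have hwne : codeMap (Δ L)ᶜ (Δ M) (Δ N) (α + α', β + β', γ + γ') ≠ 0 := by
      rw [hw_eq]
      intro h0
      apply hneq
      funext i
      have hi := congrFun h0 i
      rcases zmod2_cases (codeMap (Δ L)ᶜ (Δ M) (Δ N) (α, β, γ) i) with h | h <;>
        rcases zmod2_cases (codeMap (Δ L)ᶜ (Δ M) (Δ N) (α', β', γ') i) with h' | h' <;>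
        simp [h, h'] at hi ⊢ <;> try rfl
    have h1 := wt_bounds hm L M N α β γ hune
    have h2 := wt_bounds hm L M N α' β' γ' hvne
    have h3 := wt_bounds hm L M N (α + α') (β + β') (γ + γ') hwne
    rw [hw_eq] at h3
    have hadd := wtv_add (codeMap (Δ L)ᶜ (Δ M) (Δ N) (α, β, γ))
      (codeMap (Δ L)ᶜ (Δ M) (Δ N) (α', β', γ')) hsupp
    have hK : 0 < 2 ^ (M.card + N.card) := by positivity
    have hppow : 2 ^ (L.card + 1) < 2 ^ m := Nat.pow_lt_pow_right one_lt_two (by omega)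
    have hpp : 2 ^ (L.card + 1) = 2 * 2 ^ L.card := by rw [pow_succ']
    have hLm : 2 ^ L.card ≤ 2 ^ m := Nat.pow_le_pow_right (by norm_num) (by omega)
    have hkey : 2 ^ (m + M.card + N.card)
        < 2 * ((2 ^ m - 2 ^ L.card) * 2 ^ (M.card + N.card)) := by
      have hU : 2 ^ (m + M.card + N.card) = 2 ^ m * 2 ^ (M.card + N.card) := by
        rw [add_assoc, pow_add]
      have h5 : 2 ^ m < 2 * (2 ^ m - 2 ^ L.card) := by omega
      calc 2 ^ (m + M.card + N.card) = 2 ^ m * 2 ^ (M.card + N.card) := hU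
        _ < (2 * (2 ^ m - 2 ^ L.card)) * 2 ^ (M.card + N.card) :=
            mul_lt_mul_of_pos_right h5 hK
        _ = 2 * ((2 ^ m - 2 ^ L.card) * 2 ^ (M.card + N.card)) := by ring
    linarith [h1.2, h2.1, h3.1]
  · -- self-orthogonality
    intro hMN c hc c' hc'
    rw [SetLike.mem_coe, LinearMap.mem_range] at hc hc'
    obtain ⟨⟨α, β, γ⟩, rfl⟩ := hc
    obtain ⟨⟨α', β', γ'⟩, rfl⟩ := hc'
    rw [orth_sum_eq, triple_expand]
    have D1 : ((Δ M).card : ZMod 2) = 0 ∨ ((Δ N).card : ZMod 2) = 0 := by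
      by_cases hμ : 1 ≤ M.card
      · exact Or.inl (card_Δ_zmod hμ)
      · exact Or.inr (card_Δ_zmod (by omega))
    have D2 : ((Δ N).card : ZMod 2) = 0 ∨
        ((∑ v ∈ Δ M, dot (β + γ) v) = 0 ∧ (∑ v ∈ Δ M, dot (β' + γ') v) = 0 ∧
          (∑ v ∈ Δ M, dot (β + γ) v * dot (β' + γ') v) = 0) := by
      by_cases hν : 1 ≤ N.card
      · exact Or.inl (card_Δ_zmod hν)
      · exact Or.inr ⟨sum_dot_zero _ (by omega), sum_dot_zero _ (by omega),
          sum_dot_mul_zero _ _ (by omega)⟩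
    have D3 : ((Δ M).card : ZMod 2) = 0 ∨
        ((∑ v ∈ Δ N, dot β v) = 0 ∧ (∑ v ∈ Δ N, dot β' v) = 0 ∧
          (∑ v ∈ Δ N, dot β v * dot β' v) = 0) := by
      by_cases hμ : 1 ≤ M.card
      · exact Or.inl (card_Δ_zmod hμ)
      · exact Or.inr ⟨sum_dot_zero _ (by omega), sum_dot_zero _ (by omega),
          sum_dot_mul_zero _ _ (by omega)⟩
    have D4 : ((∑ v ∈ Δ M, dot (β + γ) v) = 0 ∧ (∑ v ∈ Δ M, dot (β' + γ') v) = 0) ∨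
        ((∑ v ∈ Δ N, dot β v) = 0 ∧ (∑ v ∈ Δ N, dot β' v) = 0) := by
      by_cases hμ : 2 ≤ M.card
      · exact Or.inl ⟨sum_dot_zero _ hμ, sum_dot_zero _ hμ⟩
      · exact Or.inr ⟨sum_dot_zero _ (by omega), sum_dot_zero _ (by omega)⟩
    rcases D1 with h1 | h1 <;>
      rcases D2 with h2 | ⟨h2a, h2b, h2c⟩ <;>
      rcases D3 with h3 | ⟨h3a, h3b, h3c⟩ <;>
      rcases D4 with ⟨h4a, h4b⟩ | ⟨h4a, h4b⟩ <;>
      simp [*]
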